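/- Quadrature exactness on the disk-slice: let (s_j, w_j^{(s)}), j=1..M₁, be Gauss quadrature for the weight (β-s)^a (s-α)^b ρ(s)^{2c+1} on [α,β], and (t_i, w_i^{(t)}), i=1..M₂, Gauss quadrature for (1-t²)^c on [-1,1], with 2M₁−1 ≥ N and 2M₂−1 ≥ N. Then for every bivariate polynomial f of total degree ≤ N, ∬_Ω f(x,y) W^{(a,b,c)}(x,y) dA = (1/2) Σ_{i,j} w_j^{(s)} w_i^{(t)} [f(s_j, ρ(s_j) t_i) + f(s_j, −ρ(s_j) t_i)]. -/

import Mathlib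

open MeasureTheory Set Polynomial

namespace Stmt16Aux

/-- Group a quadrature sum by node values. -/
lemma sum_group {M : ℕ} (x : Fin M → ℝ) (w : Fin M → ℝ) (g : ℝ → ℝ) :
    ∑ j, w j * g (x j) =
      ∑ v ∈ Finset.image x Finset.univ,
        (∑ j ∈ Finset.univ.filter (fun j => x j = v), w j) * g v := by
  rw [← Finset.sum_fiberwise_of_maps_to (g := x)
      (fun j _ => Finset.mem_image_of_mem x (Finset.mem_univ j))
      (fun j => w j * g (x j))]
  refine Finset.sum_congr rfl fun v hv => ?_
  rw [Finset.sum_mul]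
  refine Finset.sum_congr rfl fun j hj => ?_
  rw [(Finset.mem_filter.mp hj).2]

/-- An affine polynomial, nonnegative on `Icc l u`, with prescribed sign at `v ∉ Icc l u`. -/
lemma exists_linear (l u v : ℝ) (hv : v ∉ Icc l u) (e : ℝ) (he : e ≠ 0) :
    ∃ q : Polynomial ℝ, q.natDegree ≤ 1 ∧ (∀ y ∈ Icc l u, 0 ≤ q.eval y) ∧
      0 < e * q.eval v := by
  have hcase : v < l ∨ u < v := by
    by_contra hc
    push_neg at hc
    exact hv (mem_Icc.mpr ⟨hc.1, hc.2⟩)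
  rcases he.lt_or_gt with hel | heg
  · rcases hcase with h | h
    ·
      refine ⟨X - C ((v + l) / 2), ?_, fun y hy => ?_, ?_⟩
      · exact (natDegree_sub_le _ _).trans (by rw [natDegree_X, natDegree_C]; simp)
      · simp only [eval_sub, eval_X, eval_C]
        have := hy.1; linarith
      · simp only [eval_sub, eval_X, eval_C]
        nlinarith
    ·
      refine ⟨C ((u + v) / 2) - X, ?_, fun y hy => ?_, ?_⟩
      · exact (natDegree_sub_le _ _).trans (by rw [natDegree_C, natDegree_X]; simp)
      · simp only [eval_sub, eval_X, eval_C]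
        have := hy.2; linarith
      · simp only [eval_sub, eval_X, eval_C]
        nlinarith
  · rcases hcase with h | h
    ·
      refine ⟨X - C (v - 1), ?_, fun y hy => ?_, ?_⟩
      · exact (natDegree_sub_le _ _).trans (by rw [natDegree_X, natDegree_C]; simp)
      · simp only [eval_sub, eval_X, eval_C]
        have := hy.1; linarith
      · simp only [eval_sub, eval_X, eval_C]
        nlinarith
    ·
      refine ⟨C (v + 1) - X, ?_, fun y hy => ?_, ?_⟩
      · exact (natDegree_sub_le _ _).trans (by rw [natDegree_C, natDegree_X]; simp)
      · simp only [eval_sub, eval_X, eval_C]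
        have := hy.2; linarith
      · simp only [eval_sub, eval_X, eval_C]
        nlinarith

noncomputable def nodePoly {M : ℕ} (x : Fin M → ℝ) (v : ℝ) : Polynomial ℝ :=
  ∏ v' ∈ (Finset.image x Finset.univ).erase v, (X - C v') ^ 2

lemma nodePoly_nonneg {M : ℕ} (x : Fin M → ℝ) (v y : ℝ) :
    0 ≤ (nodePoly x v).eval y := by
  rw [nodePoly, eval_prod]
  exact Finset.prod_nonneg fun v' _ => by simp [eval_pow]; positivity

lemma nodePoly_pos {M : ℕ} (x : Fin M → ℝ) (v : ℝ) :
    0 < (nodePoly x v).eval v := by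
  rw [nodePoly, eval_prod]
  refine Finset.prod_pos fun v' hv' => ?_
  have : v - v' ≠ 0 := sub_ne_zero.mpr (Ne.symm (Finset.ne_of_mem_erase hv'))
  simp only [eval_pow, eval_sub, eval_X, eval_C]
  positivity

lemma nodePoly_eval_node {M : ℕ} (x : Fin M → ℝ) (v : ℝ) {j : Fin M}
    (h : x j ≠ v) : (nodePoly x v).eval (x j) = 0 := by
  rw [nodePoly, eval_prod]
  refine Finset.prod_eq_zero (i := x j)
    (Finset.mem_erase.mpr ⟨h, Finset.mem_image_of_mem x (Finset.mem_univ j)⟩) ?_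
  simp [eval_pow]

lemma nodePoly_natDegree_le {M : ℕ} (x : Fin M → ℝ) (v : ℝ)
    (hvim : v ∈ Finset.image x Finset.univ) :
    (nodePoly x v).natDegree ≤ 2 * (M - 1) := by
  refine (natDegree_prod_le _ _).trans ?_
  have h1 : ∀ v' : ℝ, ((X - C v') ^ 2 : Polynomial ℝ).natDegree = 2 := by
    intro v'; rw [natDegree_pow, natDegree_X_sub_C]
  have h2 : (Finset.image x Finset.univ).card ≤ M := by
    simpa using Finset.card_image_le (s := (Finset.univ : Finset (Fin M))) (f := x)
  have h3 := Finset.card_erase_of_mem hvim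
  calc ∑ v' ∈ (Finset.image x Finset.univ).erase v, ((X - C v') ^ 2 : Polynomial ℝ).natDegree
      = ((Finset.image x Finset.univ).erase v).card * 2 := by
        simp [h1, Finset.sum_const, mul_comm]
    _ ≤ 2 * (M - 1) := by omega

lemma sum_eval_eq {M : ℕ} (x : Fin M → ℝ) (w : Fin M → ℝ) (v : ℝ)
    (p : Polynomial ℝ) (hp : ∀ j, x j ≠ v → p.eval (x j) = 0) :
    ∑ j, w j * p.eval (x j) =
      (∑ j ∈ Finset.univ.filter (fun j => x j = v), w j) * p.eval v := by
  rw [Finset.sum_mul, Finset.sum_filter]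
  refine Finset.sum_congr rfl fun j _ => ?_
  by_cases h : x j = v
  · rw [if_pos h, h]
  · rw [if_neg h, hp j h, mul_zero]

theorem groupWeight_eq_zero
    (l u : ℝ) (wgt : ℝ → ℝ) (hwpos : ∀ y ∈ Ioo l u, 0 < wgt y)
    {M D : ℕ} (x : Fin M → ℝ) (w : Fin M → ℝ) (hD : 2 * M - 1 ≤ D)
    (hquad : ∀ p : Polynomial ℝ, p.natDegree ≤ D →
      ∫ y in Ioo l u, p.eval y * wgt y = ∑ j, w j * p.eval (x j))
    {v : ℝ} (hv : v ∉ Icc l u) :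
    ∑ j ∈ Finset.univ.filter (fun j => x j = v), w j = 0 := by
  set Wv := ∑ j ∈ Finset.univ.filter (fun j => x j = v), w j with hWv
  by_cases hvim : v ∈ Finset.image x Finset.univ
  · by_contra hW
    have hM1 : 1 ≤ M := by
      obtain ⟨j, -, -⟩ := Finset.mem_image.mp hvim
      exact j.pos
    obtain ⟨q, hq1, hq2, hq3⟩ := exists_linear l u v hv (-Wv) (neg_ne_zero.mpr hW)
    set p := nodePoly x v * q with hpdef
    have hdeg : p.natDegree ≤ D := by
      refine (natDegree_mul_le).trans ?_
      have := nodePoly_natDegree_le x v hvim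
      omega
    have key := hquad p hdeg
    have hrhs : ∑ j, w j * p.eval (x j) = Wv * p.eval v := by
      refine sum_eval_eq x w v p fun j hj => ?_
      rw [hpdef, eval_mul, nodePoly_eval_node x v hj, zero_mul]
    have hlhs : 0 ≤ ∫ y in Ioo l u, p.eval y * wgt y := by
      refine setIntegral_nonneg measurableSet_Ioo fun y hy => ?_
      have : 0 ≤ p.eval y := by
        rw [hpdef, eval_mul]
        exact mul_nonneg (nodePoly_nonneg x v y) (hq2 y (Ioo_subset_Icc_self hy))
      exact mul_nonneg this (hwpos y hy).le
    have hneg : Wv * p.eval v < 0 := by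
      have h1 : Wv * q.eval v < 0 := by nlinarith
      have h2 := nodePoly_pos x v
      rw [hpdef, eval_mul]
      nlinarith
    rw [key, hrhs] at hlhs
    linarith
  · have : Finset.univ.filter (fun j => x j = v) = ∅ := by
      refine Finset.filter_eq_empty_iff.mpr fun {j} _ hj => ?_
      exact hvim (hj ▸ Finset.mem_image_of_mem x (Finset.mem_univ j))
    rw [hWv, this, Finset.sum_empty]

theorem groupWeight_eq_zero_of_nonintegrable
    (l u : ℝ) (wgt : ℝ → ℝ) (hwnn : ∀ y ∈ Ioo l u, 0 ≤ wgt y)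
    (hwm : AEStronglyMeasurable wgt (volume.restrict (Ioo l u)))
    (hnon : ¬ IntegrableOn wgt (Ioo l u) volume)
    {M D : ℕ} (x : Fin M → ℝ) (w : Fin M → ℝ) (hD : 2 * M - 1 ≤ D)
    (hquad : ∀ p : Polynomial ℝ, p.natDegree ≤ D →
      ∫ y in Ioo l u, p.eval y * wgt y = ∑ j, w j * p.eval (x j))
    (v : ℝ) :
    ∑ j ∈ Finset.univ.filter (fun j => x j = v), w j = 0 := by
  set Wv := ∑ j ∈ Finset.univ.filter (fun j => x j = v), w j with hWv
  by_cases hvim : v ∈ Finset.image x Finset.univ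
  · have hM1 : 1 ≤ M := by
      obtain ⟨j, -, -⟩ := Finset.mem_image.mp hvim
      exact j.pos
    -- total weight is zero
    have h1 : ∫ y in Ioo l u, (1 : Polynomial ℝ).eval y * wgt y = ∑ j, w j * (1 : Polynomial ℝ).eval (x j) :=
      hquad 1 (by simp)
    have hint1 : ¬ Integrable (fun y => (1 : Polynomial ℝ).eval y * wgt y) (volume.restrict (Ioo l u)) := by
      intro hcon
      exact hnon (by simpa [IntegrableOn] using hcon)
    have htot : ∑ j, w j = 0 := by
      have := integral_undef hint1
      rw [this] at h1
      simpa using h1.symm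
    set p := nodePoly x v + 1 with hpdef
    have hdeg : p.natDegree ≤ D := by
      refine (natDegree_add_le _ _).trans ?_
      have := nodePoly_natDegree_le x v hvim
      simp only [natDegree_one]
      omega
    have key := hquad p hdeg
    have hintp : ¬ Integrable (fun y => p.eval y * wgt y) (volume.restrict (Ioo l u)) := by
      intro hcon
      refine hnon (hcon.mono hwm ?_)
      refine (ae_restrict_iff' measurableSet_Ioo).mpr (Filter.Eventually.of_forall fun y hy => ?_)
      have h2 : (1 : ℝ) ≤ p.eval y := by
        rw [hpdef, eval_add, eval_one]
        have := nodePoly_nonneg x v y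
        linarith
      have h3 := hwnn y hy
      rw [Real.norm_eq_abs, Real.norm_eq_abs, abs_of_nonneg h3, abs_of_nonneg (by nlinarith)]
      nlinarith
    have hzero : (0 : ℝ) = ∑ j, w j * p.eval (x j) := by
      rw [← key, integral_undef hintp]
    have hsum : ∑ j, w j * p.eval (x j) = Wv * (nodePoly x v).eval v + ∑ j, w j := by
      have : ∀ j, p.eval (x j) = (nodePoly x v).eval (x j) + 1 := by
        intro j; rw [hpdef, eval_add, eval_one]
      calc ∑ j, w j * p.eval (x j) = ∑ j, (w j * (nodePoly x v).eval (x j) + w j) := by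
            refine Finset.sum_congr rfl fun j _ => ?_
            rw [this j]; ring
        _ = (∑ j, w j * (nodePoly x v).eval (x j)) + ∑ j, w j := Finset.sum_add_distrib
        _ = Wv * (nodePoly x v).eval v + ∑ j, w j := by
            rw [sum_eval_eq x w v _ (fun j hj => nodePoly_eval_node x v hj)]
    have hWvz : Wv * (nodePoly x v).eval v = 0 := by
      rw [hsum, htot] at hzero
      linarith
    have := nodePoly_pos x v
    rcases mul_eq_zero.mp hWvz with h | h
    · exact h
    · exact absurd h (by positivity)
  · have : Finset.univ.filter (fun j => x j = v) = ∅ := by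
      refine Finset.filter_eq_empty_iff.mpr fun {j} _ hj => ?_
      exact hvim (hj ▸ Finset.mem_image_of_mem x (Finset.mem_univ j))
    rw [hWv, this, Finset.sum_empty]

/-- Quadrature sums only see node values through their restriction to `Icc l u`. -/
theorem quad_sum_congr
    (l u : ℝ) (wgt : ℝ → ℝ) (hwpos : ∀ y ∈ Ioo l u, 0 < wgt y)
    {M D : ℕ} (x : Fin M → ℝ) (w : Fin M → ℝ) (hD : 2 * M - 1 ≤ D)
    (hquad : ∀ p : Polynomial ℝ, p.natDegree ≤ D →
      ∫ y in Ioo l u, p.eval y * wgt y = ∑ j, w j * p.eval (x j))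
    (g h : ℝ → ℝ) (hgh : ∀ y ∈ Icc l u, g y = h y) :
    ∑ j, w j * g (x j) = ∑ j, w j * h (x j) := by
  rw [sum_group, sum_group]
  refine Finset.sum_congr rfl fun v hvim => ?_
  by_cases hv : v ∈ Icc l u
  · rw [hgh v hv]
  · rw [groupWeight_eq_zero l u wgt hwpos x w hD hquad hv, zero_mul, zero_mul]

theorem quad_sum_zero
    (l u : ℝ) (wgt : ℝ → ℝ) (hwnn : ∀ y ∈ Ioo l u, 0 ≤ wgt y)
    (hwm : AEStronglyMeasurable wgt (volume.restrict (Ioo l u)))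
    (hnon : ¬ IntegrableOn wgt (Ioo l u) volume)
    {M D : ℕ} (x : Fin M → ℝ) (w : Fin M → ℝ) (hD : 2 * M - 1 ≤ D)
    (hquad : ∀ p : Polynomial ℝ, p.natDegree ≤ D →
      ∫ y in Ioo l u, p.eval y * wgt y = ∑ j, w j * p.eval (x j))
    (g : ℝ → ℝ) :
    ∑ j, w j * g (x j) = 0 := by
  rw [sum_group]
  refine Finset.sum_eq_zero fun v hvim => ?_
  rw [groupWeight_eq_zero_of_nonintegrable l u wgt hwnn hwm hnon x w hD hquad v, zero_mul]

noncomputable def drho (s : ℝ) : ℝ := 1 / (2 * Real.sqrt (1 - s ^ 2)) * -(2 * s ^ 1)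

noncomputable def Tmap : ℝ × ℝ → ℝ × ℝ := fun z => (z.1, Real.sqrt (1 - z.1 ^ 2) * z.2)

noncomputable def Tderiv (z : ℝ × ℝ) : (ℝ × ℝ) →L[ℝ] (ℝ × ℝ) :=
  LinearMap.toContinuousLinearMap (Matrix.toLin (Module.Basis.finTwoProd ℝ) (Module.Basis.finTwoProd ℝ)
    !![1, 0; drho z.1 * z.2, Real.sqrt (1 - z.1 ^ 2)])

lemma Tderiv_det (z : ℝ × ℝ) : (Tderiv z).det = Real.sqrt (1 - z.1 ^ 2) := by
  rw [Tderiv, ContinuousLinearMap.det, LinearMap.coe_toContinuousLinearMap,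
    LinearMap.det_toLin, Matrix.det_fin_two_of]
  ring

lemma hasDerivAt_rho {s : ℝ} (hs : 1 - s ^ 2 ≠ 0) :
    HasDerivAt (fun s : ℝ => Real.sqrt (1 - s ^ 2)) (drho s) s := by
  have hinner : HasDerivAt (fun x : ℝ => 1 - x ^ 2) (-(↑2 * s ^ 1)) s :=
    (hasDerivAt_pow 2 s).const_sub 1
  have hsq : HasDerivAt Real.sqrt (1 / (2 * Real.sqrt (1 - s ^ 2))) (1 - s ^ 2) :=
    Real.hasDerivAt_sqrt hs
  have h := hsq.comp s hinner
  exact h.congr_deriv (by norm_num [drho])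

lemma hasFDerivAt_Tmap {z : ℝ × ℝ} (hz : 1 - z.1 ^ 2 ≠ 0) :
    HasFDerivAt Tmap (Tderiv z) z := by
  have h1 : HasFDerivAt (fun w : ℝ × ℝ => Real.sqrt (1 - w.1 ^ 2))
      (drho z.1 • ContinuousLinearMap.fst ℝ ℝ ℝ) z :=
    (hasDerivAt_rho hz).comp_hasFDerivAt z hasFDerivAt_fst
  have h3 : HasFDerivAt (fun w : ℝ × ℝ => Real.sqrt (1 - w.1 ^ 2) * w.2)
      (Real.sqrt (1 - z.1 ^ 2) • ContinuousLinearMap.snd ℝ ℝ ℝ +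
        z.2 • (drho z.1 • ContinuousLinearMap.fst ℝ ℝ ℝ)) z :=
    h1.mul hasFDerivAt_snd
  have h4 := HasFDerivAt.prodMk (hasFDerivAt_fst (𝕜 := ℝ) (p := z) (E := ℝ) (F := ℝ)) h3
  have heq : Tderiv z = (ContinuousLinearMap.fst ℝ ℝ ℝ).prod
      (Real.sqrt (1 - z.1 ^ 2) • ContinuousLinearMap.snd ℝ ℝ ℝ +
        z.2 • (drho z.1 • ContinuousLinearMap.fst ℝ ℝ ℝ)) := by
    apply ContinuousLinearMap.ext
    intro v
    have hv : (Tderiv z) v = Matrix.toLin (Module.Basis.finTwoProd ℝ) (Module.Basis.finTwoProd ℝ)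
        !![1, 0; drho z.1 * z.2, Real.sqrt (1 - z.1 ^ 2)] v := rfl
    rw [hv, Matrix.toLin_finTwoProd_apply]
    simp only [ContinuousLinearMap.prod_apply, ContinuousLinearMap.add_apply,
      ContinuousLinearMap.smul_apply, ContinuousLinearMap.coe_fst',
      ContinuousLinearMap.coe_snd', smul_eq_mul]
    simp only [Prod.mk.injEq]
    constructor <;> ring
  rw [heq]
  exact h4

lemma Tmap_image (α β : ℝ) (h0 : 0 < α) (hαβ : α < β) (hβ : β < 1) :
    {z : ℝ × ℝ | α < z.1 ∧ z.1 < β ∧ z.2 ^ 2 < 1 - z.1 ^ 2} =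
      Tmap '' (Ioo α β ×ˢ Ioo (-1 : ℝ) 1) := by
  ext ⟨x, y⟩
  simp only [mem_setOf_eq, mem_image, mem_prod, mem_Ioo, Prod.exists]
  constructor
  · rintro ⟨h1, h2, h3⟩
    have hx1 : 1 - x ^ 2 > 0 := by nlinarith
    have hρ : Real.sqrt (1 - x ^ 2) > 0 := Real.sqrt_pos.mpr hx1
    have hρ2 : Real.sqrt (1 - x ^ 2) ^ 2 = 1 - x ^ 2 := Real.sq_sqrt hx1.le
    refine ⟨x, y / Real.sqrt (1 - x ^ 2), ⟨⟨h1, h2⟩, ?_, ?_⟩, ?_⟩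
    · rw [neg_lt, ← neg_div]
      rw [div_lt_one hρ]
      nlinarith [abs_nonneg y, sq_abs y, neg_abs_le y, le_abs_self y]
    · rw [div_lt_one hρ]
      nlinarith [abs_nonneg y, sq_abs y, neg_abs_le y, le_abs_self y]
    · show (x, Real.sqrt (1 - x ^ 2) * (y / Real.sqrt (1 - x ^ 2))) = (x, y)
      have hcan : Real.sqrt (1 - x ^ 2) * (y / Real.sqrt (1 - x ^ 2)) = y := by
        field_simp
      rw [hcan]
  · rintro ⟨s, t, ⟨⟨hs1, hs2⟩, ht1, ht2⟩, heq⟩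
    simp only [Tmap, Prod.mk.injEq] at heq
    obtain ⟨rfl, rfl⟩ := heq
    have hx1 : (0:ℝ) < 1 - s ^ 2 := by nlinarith
    have hρ2 : Real.sqrt (1 - s ^ 2) ^ 2 = 1 - s ^ 2 := Real.sq_sqrt hx1.le
    refine ⟨hs1, hs2, ?_⟩
    rw [mul_pow, hρ2]
    nlinarith [mul_pos hx1 (show (0:ℝ) < 1 - t ^ 2 by nlinarith)]

/-- Even-part substitution polynomial in the `t` variable, for fixed `s`. -/
noncomputable def Psub (f : MvPolynomial (Fin 2) ℝ) (s : ℝ) : Polynomial ℝ :=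
  ∑ d ∈ f.support, if Even (d 1) then
    C (MvPolynomial.coeff d f * s ^ (d 0) * (1 - s ^ 2) ^ (d 1 / 2)) * X ^ (d 1) else 0

lemma support_deg_le {f : MvPolynomial (Fin 2) ℝ} {N : ℕ} (hf : f.totalDegree ≤ N)
    {d : Fin 2 →₀ ℕ} (hd : d ∈ f.support) : d 0 + d 1 ≤ N := by
  have h := MvPolynomial.le_totalDegree hd
  have h2 : d.sum (fun _ e => e) = d 0 + d 1 := by
    rw [Finsupp.sum_fintype _ _ (fun _ => rfl), Fin.sum_univ_two]
  omega

lemma Psub_natDegree_le (f : MvPolynomial (Fin 2) ℝ) {N : ℕ} (hf : f.totalDegree ≤ N)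
    (s : ℝ) : (Psub f s).natDegree ≤ N := by
  refine natDegree_sum_le_of_forall_le _ _ fun d hd => ?_
  split_ifs with h
  · refine natDegree_mul_le.trans ?_
    have h1 := support_deg_le hf hd
    have h2 : (X ^ (d 1) : Polynomial ℝ).natDegree ≤ d 1 := by
      simp [natDegree_X_pow]
    simp only [natDegree_C]
    omega
  · simp

lemma eval_Psub (f : MvPolynomial (Fin 2) ℝ) {s : ℝ} (hs : s ^ 2 ≤ 1) (τ : ℝ) :
    (Psub f s).eval τ = (1 / 2) * (MvPolynomial.eval ![s, Real.sqrt (1 - s ^ 2) * τ] f +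
      MvPolynomial.eval ![s, -(Real.sqrt (1 - s ^ 2) * τ)] f) := by
  have hsq : Real.sqrt (1 - s ^ 2) ^ 2 = 1 - s ^ 2 := Real.sq_sqrt (by linarith)
  rw [MvPolynomial.eval_eq', MvPolynomial.eval_eq', Psub, eval_finset_sum,
    ← Finset.sum_add_distrib, Finset.mul_sum]
  refine Finset.sum_congr rfl fun d hd => ?_
  rw [apply_ite (eval τ), eval_mul, eval_C, eval_pow, eval_X, eval_zero]
  rw [Fin.prod_univ_two, Fin.prod_univ_two]
  simp only [Matrix.cons_val_zero, Matrix.cons_val_one, Matrix.head_cons]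
  by_cases h : Even (d 1)
  · rw [if_pos h]
    obtain ⟨m, hm⟩ := h
    have hd2 : d 1 / 2 = m := by omega
    have hneg : (-(Real.sqrt (1 - s ^ 2) * τ)) ^ (d 1) = (Real.sqrt (1 - s ^ 2) * τ) ^ (d 1) :=
      Even.neg_pow ⟨m, hm⟩ _
    have hpow : (Real.sqrt (1 - s ^ 2) * τ) ^ (d 1) = (1 - s ^ 2) ^ (d 1 / 2) * τ ^ (d 1) := by
      rw [mul_pow, hd2]
      congr 1
      rw [show m + m = 2 * m by ring] at hm
      rw [hm, pow_mul, hsq]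
    rw [hneg, hpow]
    ring
  · rw [if_neg h]
    have hodd : Odd (d 1) := Nat.not_even_iff_odd.mp h
    have hneg : (-(Real.sqrt (1 - s ^ 2) * τ)) ^ (d 1) = -((Real.sqrt (1 - s ^ 2) * τ) ^ (d 1)) :=
      Odd.neg_pow hodd _
    rw [hneg]
    ring

/-- The `t`-quadrature of the even-part substitution, as a polynomial in `s`. -/
noncomputable def Psum (f : MvPolynomial (Fin 2) ℝ) {M₂ : ℕ} (t wt : Fin M₂ → ℝ) : Polynomial ℝ :=
  ∑ d ∈ f.support, if Even (d 1) then
    C (MvPolynomial.coeff d f * ∑ i, wt i * t i ^ (d 1)) *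
      (X ^ (d 0) * (1 - X ^ 2) ^ (d 1 / 2)) else 0

lemma Psum_natDegree_le (f : MvPolynomial (Fin 2) ℝ) {N : ℕ} (hf : f.totalDegree ≤ N)
    {M₂ : ℕ} (t wt : Fin M₂ → ℝ) : (Psum f t wt).natDegree ≤ N := by
  refine natDegree_sum_le_of_forall_le _ _ fun d hd => ?_
  split_ifs with h
  · refine natDegree_mul_le.trans ?_
    have h1 := support_deg_le hf hd
    have h2 : ((X : Polynomial ℝ) ^ (d 0) * (1 - X ^ 2) ^ (d 1 / 2)).natDegree
        ≤ d 0 + d 1 := by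
      refine natDegree_mul_le.trans ?_
      have h3 : Polynomial.natDegree (1 - X ^ 2 : Polynomial ℝ) ≤ 2 := by
        refine (natDegree_sub_le _ _).trans ?_
        simp [natDegree_one, natDegree_X_pow]
      have h4 := natDegree_pow_le (p := (1 - X ^ 2 : Polynomial ℝ)) (n := d 1 / 2)
      have h5 : (X ^ (d 0) : Polynomial ℝ).natDegree ≤ d 0 := by simp [natDegree_X_pow]
      have h6 : d 1 / 2 * 2 ≤ d 1 := by omega
      nlinarith [natDegree_pow_le (p := (1 - X ^ 2 : Polynomial ℝ)) (n := d 1 / 2)]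
    simp only [natDegree_C]
    omega
  · simp

lemma eval_Psum (f : MvPolynomial (Fin 2) ℝ) {M₂ : ℕ} (t wt : Fin M₂ → ℝ) (s : ℝ) :
    (Psum f t wt).eval s = ∑ i, wt i * (Psub f s).eval (t i) := by
  have hsub : ∀ i, (Psub f s).eval (t i) = ∑ d ∈ f.support,
      (if Even (d 1) then (MvPolynomial.coeff d f * s ^ (d 0) * (1 - s ^ 2) ^ (d 1 / 2))
        * (t i) ^ (d 1) else 0) := by
    intro i
    rw [Psub, eval_finset_sum]
    refine Finset.sum_congr rfl fun d hd => ?_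
    rw [apply_ite (eval (t i)), eval_mul, eval_C, eval_pow, eval_X, eval_zero]
  calc (Psum f t wt).eval s
      = ∑ d ∈ f.support, (if Even (d 1) then
          (MvPolynomial.coeff d f * ∑ i, wt i * t i ^ (d 1)) *
            (s ^ (d 0) * (1 - s ^ 2) ^ (d 1 / 2)) else 0) := by
        rw [Psum, eval_finset_sum]
        refine Finset.sum_congr rfl fun d hd => ?_
        rw [apply_ite (eval s), eval_mul, eval_C, eval_mul, eval_pow, eval_X, eval_pow,
          eval_sub, eval_one, eval_pow, eval_X, eval_zero]
    _ = ∑ d ∈ f.support, ∑ i, wt i * (if Even (d 1) then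
          (MvPolynomial.coeff d f * s ^ (d 0) * (1 - s ^ 2) ^ (d 1 / 2)) * (t i) ^ (d 1)
          else 0) := by
        refine Finset.sum_congr rfl fun d hd => ?_
        split_ifs with h
        · rw [Finset.mul_sum, Finset.sum_mul]
          refine Finset.sum_congr rfl fun i _ => by ring
        · simp
    _ = ∑ i, wt i * (Psub f s).eval (t i) := by
        rw [Finset.sum_comm]
        refine Finset.sum_congr rfl fun i _ => ?_
        rw [hsub i, Finset.mul_sum]

end Stmt16Aux

set_option maxHeartbeats 1000000 in
open Stmt16Aux in
/-- exactness of the tensor Gauss quadrature rule on the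
disk-slice for bivariate polynomials of total degree at most `N`. -/
theorem stmt16
    (α β : ℝ) (h0 : 0 < α) (hαβ : α < β) (hβ : β < 1)
    (a b c : ℝ) (N M₁ M₂ : ℕ)
    (s : Fin M₁ → ℝ) (ws : Fin M₁ → ℝ) (t : Fin M₂ → ℝ) (wt : Fin M₂ → ℝ)
    (hM₁ : N + 1 ≤ 2 * M₁) (hM₂ : N + 1 ≤ 2 * M₂)
    -- Gauss quadrature for (β-s)^a (s-α)^b ρ(s)^{2c+1} on [α,β]
    (hs : ∀ p : Polynomial ℝ, p.natDegree ≤ 2 * M₁ - 1 →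
      ∫ x in Ioo α β,
          p.eval x * ((β - x) ^ a * (x - α) ^ b *
            Real.sqrt (1 - x ^ 2) ^ (2 * c + 1)) =
        ∑ j, ws j * p.eval (s j))
    -- Gauss quadrature for (1-t²)^c on [-1,1]
    (ht : ∀ p : Polynomial ℝ, p.natDegree ≤ 2 * M₂ - 1 →
      ∫ x in Ioo (-1 : ℝ) 1, p.eval x * (1 - x ^ 2) ^ c =
        ∑ i, wt i * p.eval (t i))
    (Ω : Set (ℝ × ℝ))
    (hΩ : Ω = {z : ℝ × ℝ | α < z.1 ∧ z.1 < β ∧ z.2 ^ 2 < 1 - z.1 ^ 2})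
    (W : ℝ × ℝ → ℝ)
    (hW : ∀ z : ℝ × ℝ,
      W z = (β - z.1) ^ a * (z.1 - α) ^ b * (1 - z.1 ^ 2 - z.2 ^ 2) ^ c) :
    ∀ f : MvPolynomial (Fin 2) ℝ, f.totalDegree ≤ N →
      ∫ z in Ω, MvPolynomial.eval ![z.1, z.2] f * W z =
        (1 / 2) * ∑ j, ∑ i, ws j * wt i *
          (MvPolynomial.eval ![s j, Real.sqrt (1 - s j ^ 2) * t i] f +
            MvPolynomial.eval ![s j, -(Real.sqrt (1 - s j ^ 2) * t i)] f) := by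
  intro f hf
  have hN1 : N ≤ 2 * M₁ - 1 := by omega
  have hN2 : N ≤ 2 * M₂ - 1 := by omega
  set w1 : ℝ → ℝ := fun x => (β - x) ^ a * (x - α) ^ b *
    Real.sqrt (1 - x ^ 2) ^ (2 * c + 1) with hw1def
  set w2 : ℝ → ℝ := fun x => (1 - x ^ 2) ^ c with hw2def
  set R : Set (ℝ × ℝ) := Ioo α β ×ˢ Ioo (-1 : ℝ) 1 with hRdef
  set A : ℝ × ℝ → ℝ := fun z =>
    MvPolynomial.eval ![z.1, Real.sqrt (1 - z.1 ^ 2) * z.2] f * (w1 z.1 * w2 z.2) with hAdef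
  set Φ : ℝ → ℝ := fun v => ∑ i, wt i * ((1 / 2) *
    (MvPolynomial.eval ![v, Real.sqrt (1 - v ^ 2) * t i] f +
      MvPolynomial.eval ![v, -(Real.sqrt (1 - v ^ 2) * t i)] f)) with hΦdef
  have hRmeas : MeasurableSet R := measurableSet_Ioo.prod measurableSet_Ioo
  -- basic positivity facts
  have hsq_pos : ∀ x ∈ Ioo α β, (0:ℝ) < 1 - x ^ 2 := by
    intro x hx
    have := hx.1; have := hx.2
    nlinarith
  have hw1pos : ∀ x ∈ Ioo α β, 0 < w1 x := by
    intro x hx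
    have h1 : (0:ℝ) < β - x := by have := hx.2; linarith
    have h2 : (0:ℝ) < x - α := by have := hx.1; linarith
    have h3 : 0 < Real.sqrt (1 - x ^ 2) := Real.sqrt_pos.mpr (hsq_pos x hx)
    exact mul_pos (mul_pos (Real.rpow_pos_of_pos h1 a) (Real.rpow_pos_of_pos h2 b))
      (Real.rpow_pos_of_pos h3 _)
  have hw2pos : ∀ x ∈ Ioo (-1:ℝ) 1, 0 < w2 x := by
    intro x hx
    have : (0:ℝ) < 1 - x ^ 2 := by have := hx.1; have := hx.2; nlinarith
    exact Real.rpow_pos_of_pos this c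
  have hw1m : Measurable w1 := by
    rw [hw1def]
    fun_prop
  have hw2m : Measurable w2 := by
    rw [hw2def]
    fun_prop
  -- continuity of the polynomial part
  have hvcont : Continuous (fun z : ℝ × ℝ => (![z.1, Real.sqrt (1 - z.1 ^ 2) * z.2] : Fin 2 → ℝ)) := by
    refine continuous_pi fun i => ?_
    fin_cases i
    · simpa using continuous_fst
    · simp only [Matrix.cons_val_one, Matrix.head_cons]
      exact (Real.continuous_sqrt.comp (by continuity)).mul continuous_snd
  have hFcont : Continuous (fun z : ℝ × ℝ =>
      MvPolynomial.eval ![z.1, Real.sqrt (1 - z.1 ^ 2) * z.2] f) :=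
    (MvPolynomial.continuous_eval f).comp hvcont
  have hAmeas : AEStronglyMeasurable A (volume.restrict R) := by
    rw [hAdef]
    exact (hFcont.aestronglyMeasurable).mul
      (((hw1m.comp measurable_fst).mul (hw2m.comp measurable_snd)).aestronglyMeasurable)
  -- Step 1 : change of variables
  have hΩR : Ω = Tmap '' R := by
    rw [hΩ, hRdef]
    exact Tmap_image α β h0 hαβ hβ
  have step1 : ∫ z in Ω, MvPolynomial.eval ![z.1, z.2] f * W z = ∫ z in R, A z := by
    rw [hΩR]
    have hderiv : ∀ z ∈ R, HasFDerivWithinAt Tmap (Tderiv z) R z := by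
      intro z hz
      exact (hasFDerivAt_Tmap (ne_of_gt (hsq_pos z.1 hz.1))).hasFDerivWithinAt
    have hinj : InjOn Tmap R := by
      rintro ⟨s1, t1⟩ hz1 ⟨s2, t2⟩ hz2 h
      simp only [Tmap, Prod.mk.injEq] at h
      obtain ⟨h1, h2⟩ := h
      subst h1
      have hρ : 0 < Real.sqrt (1 - s1 ^ 2) := Real.sqrt_pos.mpr (hsq_pos s1 hz1.1)
      exact Prod.ext rfl (mul_left_cancel₀ (ne_of_gt hρ) h2)
    rw [integral_image_eq_integral_abs_det_fderiv_smul volume hRmeas hderiv hinj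
      (fun z => MvPolynomial.eval ![z.1, z.2] f * W z)]
    refine setIntegral_congr_fun hRmeas fun z hz => ?_
    obtain ⟨hz1, hz2⟩ := hz
    have hpos := hsq_pos z.1 hz1
    have hsqv : Real.sqrt (1 - z.1 ^ 2) ^ 2 = 1 - z.1 ^ 2 := Real.sq_sqrt hpos.le
    rw [Tderiv_det, smul_eq_mul]
    have hT1 : (Tmap z).1 = z.1 := rfl
    have hT2 : (Tmap z).2 = Real.sqrt (1 - z.1 ^ 2) * z.2 := rfl
    rw [hW]
    simp only [hT1, hT2]
    rw [abs_of_nonneg (Real.sqrt_nonneg _)]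
    have hsplit : 1 - z.1 ^ 2 - (Real.sqrt (1 - z.1 ^ 2) * z.2) ^ 2
        = (1 - z.1 ^ 2) * (1 - z.2 ^ 2) := by
      rw [mul_pow, hsqv]; ring
    have ht2 : (0:ℝ) ≤ 1 - z.2 ^ 2 := by
      have := hz2.1; have := hz2.2; nlinarith
    rw [hsplit, Real.mul_rpow hpos.le ht2]
    have hkey : Real.sqrt (1 - z.1 ^ 2) ^ (2 * c + 1)
        = Real.sqrt (1 - z.1 ^ 2) * (1 - z.1 ^ 2) ^ c := by
      rw [Real.sqrt_eq_rpow, ← Real.rpow_mul hpos.le]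
      have : (1 / 2) * (2 * c + 1) = c + 1 / 2 := by ring
      rw [this, Real.rpow_add hpos, ← Real.sqrt_eq_rpow]
      ring
    rw [hAdef]
    simp only [hw1def, hw2def]
    rw [hkey]
    ring
  have hRHSrw : (1 / 2) * ∑ j, ∑ i, ws j * wt i *
      (MvPolynomial.eval ![s j, Real.sqrt (1 - s j ^ 2) * t i] f +
        MvPolynomial.eval ![s j, -(Real.sqrt (1 - s j ^ 2) * t i)] f)
      = ∑ j, ws j * Φ (s j) := by
    rw [Finset.mul_sum]
    refine Finset.sum_congr rfl fun j _ => ?_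
    rw [hΦdef, Finset.mul_sum, Finset.mul_sum]
    refine Finset.sum_congr rfl fun i _ => by ring
  rw [step1, hRHSrw]
  by_cases hInt : IntegrableOn A R volume
  · -- integrable case
    set σm : ℝ × ℝ → ℝ × ℝ := fun z => (z.1, -z.2) with hσdef
    have hσmp : MeasurePreserving σm volume volume := by
      have h := (MeasurePreserving.id (volume : Measure ℝ)).prod
        (Measure.measurePreserving_neg (volume : Measure ℝ))
      rw [← Measure.volume_eq_prod] at h
      exact h
    have hσemb : MeasurableEmbedding σm :=
      ((MeasurableEquiv.refl ℝ).prodCongr (MeasurableEquiv.neg ℝ)).measurableEmbedding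
    have hσR : σm ⁻¹' R = R := by
      ext z
      simp only [hσdef, hRdef, mem_preimage, mem_prod, mem_Ioo]
      constructor
      · rintro ⟨h1, h2, h3⟩
        exact ⟨h1, by linarith, by linarith⟩
      · rintro ⟨h1, h2, h3⟩
        exact ⟨h1, by linarith, by linarith⟩
    have hAσint : IntegrableOn (fun z => A (σm z)) R volume := by
      have h := ((hσmp.restrict_preimage_emb hσemb R).integrable_comp_emb hσemb).mpr hInt
      rw [hσR] at h
      exact h
    have hrefl : ∫ z in R, A (σm z) = ∫ z in R, A z := by
      have h := hσmp.setIntegral_preimage_emb hσemb A R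
      rwa [hσR] at h
    set G : ℝ × ℝ → ℝ := fun z => (Psub f z.1).eval z.2 * w2 z.2 * w1 z.1 with hGdef
    have hEqOn : EqOn (fun z => (1 / 2) * (A z + A (σm z))) G R := by
      intro z hz
      obtain ⟨hz1, hz2⟩ := hz
      have hs2 : z.1 ^ 2 ≤ 1 := by nlinarith [hsq_pos z.1 hz1]
      have hw2neg : w2 (-z.2) = w2 z.2 := by
        simp only [hw2def, neg_sq]
      simp only [hσdef, hAdef, hGdef]
      rw [eval_Psub f hs2 z.2]
      rw [show Real.sqrt (1 - z.1 ^ 2) * -z.2 = -(Real.sqrt (1 - z.1 ^ 2) * z.2) from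
        mul_neg _ _, hw2neg]
      ring
    have hint3 : IntegrableOn (fun z => (1 / 2) * (A z + A (σm z))) R volume :=
      (hInt.add hAσint).const_mul _
    have hGint : IntegrableOn G R volume := hint3.congr_fun hEqOn hRmeas
    have hstep2 : ∫ z in R, A z = ∫ z in R, G z := by
      have h1 : ∫ z in R, (1 / 2) * (A z + A (σm z)) = ∫ z in R, G z :=
        setIntegral_congr_fun hRmeas hEqOn
      have h2 : ∫ z in R, (1 / 2) * (A z + A (σm z))
          = (1 / 2) * ((∫ z in R, A z) + ∫ z in R, A (σm z)) := by
        rw [integral_const_mul, integral_add hInt hAσint]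
      rw [hrefl] at h2
      rw [← h1, h2]
      ring
    rw [hstep2]
    have hmeq : volume.restrict R
        = (volume.restrict (Ioo α β)).prod (volume.restrict (Ioo (-1:ℝ) 1)) := by
      have h := Measure.prod_restrict (μ := (volume : Measure ℝ)) (ν := (volume : Measure ℝ))
        (Ioo α β) (Ioo (-1:ℝ) 1)
      rw [← Measure.volume_eq_prod] at h
      exact h.symm
    have hGint' : Integrable G
        ((volume.restrict (Ioo α β)).prod (volume.restrict (Ioo (-1:ℝ) 1))) := by
      rw [← hmeq]
      exact hGint
    have hfub : ∫ z in R, G z = ∫ x in Ioo α β, ∫ y in Ioo (-1:ℝ) 1, G (x, y) := by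
      rw [show (∫ z in R, G z) = ∫ z, G z ∂(volume.restrict R) from rfl, hmeq]
      exact integral_prod G hGint'
    rw [hfub]
    have hinner : ∀ x : ℝ, (∫ y in Ioo (-1:ℝ) 1, G (x, y)) = (Psum f t wt).eval x * w1 x := by
      intro x
      calc (∫ y in Ioo (-1:ℝ) 1, G (x, y))
          = ∫ y in Ioo (-1:ℝ) 1, ((Psub f x).eval y * w2 y) * w1 x := by
            simp only [hGdef]
        _ = (∫ y in Ioo (-1:ℝ) 1, (Psub f x).eval y * w2 y) * w1 x :=
            integral_mul_const _ _
        _ = (∑ i, wt i * (Psub f x).eval (t i)) * w1 x := by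
            have h := ht (Psub f x) ((Psub_natDegree_le f hf x).trans hN2)
            simp only [hw2def]
            rw [← h]
        _ = (Psum f t wt).eval x * w1 x := by rw [eval_Psum]
    calc ∫ x in Ioo α β, ∫ y in Ioo (-1:ℝ) 1, G (x, y)
        = ∫ x in Ioo α β, (Psum f t wt).eval x * w1 x :=
          setIntegral_congr_fun measurableSet_Ioo fun x _ => hinner x
      _ = ∑ j, ws j * (Psum f t wt).eval (s j) := by
          have h := hs (Psum f t wt) ((Psum_natDegree_le f hf t wt).trans hN1)
          simp only [hw1def]
          rw [← h]
      _ = ∑ j, ws j * Φ (s j) := by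
          refine quad_sum_congr α β w1 hw1pos s ws le_rfl (fun p hp => hs p hp)
            (fun v => (Psum f t wt).eval v) Φ (fun v hv => ?_)
          have hv2 : v ^ 2 ≤ 1 := by
            have := hv.1; have := hv.2
            nlinarith
          rw [hΦdef]
          beta_reduce
          rw [eval_Psum]
          refine Finset.sum_congr rfl fun i _ => ?_
          rw [eval_Psub f hv2]
  · -- non-integrable case : both sides are zero
    rw [integral_undef hInt]
    have hbad : ¬ IntegrableOn w1 (Ioo α β) volume ∨ ¬ IntegrableOn w2 (Ioo (-1:ℝ) 1) volume := by
      by_contra hc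
      push_neg at hc
      obtain ⟨h1, h2⟩ := hc
      obtain ⟨Cb, hCb⟩ := (isCompact_Icc.prod (isCompact_Icc (a := (-1:ℝ)) (b := 1))
        ).exists_bound_of_continuousOn hFcont.continuousOn
      have hw12 : Integrable (fun z : ℝ × ℝ => w1 z.1 * w2 z.2) (volume.restrict R) := by
        have := Integrable.mul_prod h1 h2
        rwa [Measure.prod_restrict, ← Measure.volume_eq_prod] at this
      refine hInt (Integrable.mono' (hw12.const_mul Cb) hAmeas ?_)
      refine (ae_restrict_iff' hRmeas).mpr (Filter.Eventually.of_forall fun z hz => ?_)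
      have hzK : z ∈ Icc α β ×ˢ Icc (-1:ℝ) 1 :=
        ⟨Ioo_subset_Icc_self hz.1, Ioo_subset_Icc_self hz.2⟩
      have hb := hCb z hzK
      have hw1n : 0 ≤ w1 z.1 := (hw1pos z.1 hz.1).le
      have hw2n : 0 ≤ w2 z.2 := (hw2pos z.2 hz.2).le
      rw [hAdef]
      rw [norm_mul, Real.norm_eq_abs (w1 z.1 * w2 z.2), abs_of_nonneg (mul_nonneg hw1n hw2n)]
      have : ‖MvPolynomial.eval ![z.1, Real.sqrt (1 - z.1 ^ 2) * z.2] f‖ ≤ Cb := hb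
      nlinarith [mul_nonneg hw1n hw2n, norm_nonneg
        (MvPolynomial.eval ![z.1, Real.sqrt (1 - z.1 ^ 2) * z.2] f)]
    rcases hbad with hb1 | hb2
    · refine (quad_sum_zero α β w1 (fun y hy => (hw1pos y hy).le)
        (hw1m.aestronglyMeasurable) hb1 s ws le_rfl (fun p hp => hs p hp) Φ).symm
    · refine Eq.symm (Finset.sum_eq_zero fun j _ => ?_)
      have : Φ (s j) = 0 := by
        rw [hΦdef]
        exact quad_sum_zero (-1 : ℝ) 1 w2 (fun y hy => (hw2pos y hy).le)
          (hw2m.aestronglyMeasurable) hb2 t wt le_rfl (fun p hp => ht p hp)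
          (fun τ => (1 / 2) * (MvPolynomial.eval ![s j, Real.sqrt (1 - s j ^ 2) * τ] f +
            MvPolynomial.eval ![s j, -(Real.sqrt (1 - s j ^ 2) * τ)] f))
      rw [this, mul_zero]
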